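/- arXiv:1706.01862 — 2 statements merged into one kernel-verified Lean document; each statement's English description precedes it below -/
import Mathlib

section
/- For the Watson distribution $f(u) = \frac{1}{4\pi M(1/2,3/2,\kappa)} \exp(\kappa (u^T n_0)^2)$ with $\kappa > 0$, the orientational order along the axis $n_0$ is $\mathrm{OO}(n_0) = \frac{3 e^\kappa}{2\sqrt{\kappa\pi}\,\mathrm{Erfi}(\sqrt\kappa)} - \frac{3 + 2\kappa}{4\kappa}$, where $\mathrm{Erfi}(x) = \frac{2}{\sqrt\pi}\int_0^x e^{t^2}dt$. -/
open MeasureTheory Metric Matrix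
open scoped RealInnerProductSpace

/-- The standard surface measure on the unit sphere in ℝ³ (total mass 4π). -/
noncomputable def sphereMeasure :
    Measure (sphere (0 : EuclideanSpace ℝ (Fin 3)) 1) :=
  (volume : Measure (EuclideanSpace ℝ (Fin 3))).toSphere

/-- The imaginary error function `Erfi(x) = (2/√π) ∫₀ˣ exp(t²) dt`. -/
noncomputable def Erfi (x : ℝ) : ℝ :=
  2 / Real.sqrt Real.pi * ∫ t in (0 : ℝ)..x, Real.exp (t ^ 2)

/-- The confluent hypergeometric value `M(1/2, 3/2, κ) = √π Erfi(√κ)/(2√κ)`,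
which normalizes the Watson distribution. -/
noncomputable def Mkummer (κ : ℝ) : ℝ :=
  Real.sqrt Real.pi * Erfi (Real.sqrt κ) / (2 * Real.sqrt κ)

namespace OOWatson

open Set Real Filter
open scoped ENNReal NNReal Topology

local notation "E3" => EuclideanSpace ℝ (Fin 3)

lemma polar_formula (g : sphere (0 : E3) 1 → ℝ) (w : ℝ → ℝ) (G : E3 → ℝ)
    (hG : ∀ (u : sphere (0 : E3) 1) (r : ℝ), 0 < r → G (r • (u : E3)) = g u * w r) :
    ∫ x, G x = (∫ u, g u ∂sphereMeasure) * ∫ r in Ioi (0:ℝ), r ^ 2 * w r := by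
  have h3 : Module.finrank ℝ E3 - 1 = 2 := by
    rw [finrank_euclideanSpace_fin]
  calc
    ∫ x, G x = ∫ x : ({(0:E3)}ᶜ : Set E3), G x.1 ∂((volume : Measure E3).comap Subtype.val) := by
      rw [integral_subtype_comap (measurableSet_singleton _).compl fun x ↦ G x,
        restrict_compl_singleton]
    _ = ∫ p : sphere (0:E3) 1 × Ioi (0:ℝ), g p.1 * w p.2
        ∂(volume : Measure E3).toSphere.prod (.volumeIoiPow 2) := by
      rw [← h3]
      rw [← (volume : Measure E3).measurePreserving_homeomorphUnitSphereProd.integral_comp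
        (Homeomorph.measurableEmbedding _) (fun p => g p.1 * w p.2)]
      refine integral_congr_ae (Filter.Eventually.of_forall fun x => ?_)
      have hx : (x : E3) ≠ 0 := x.2
      have hnorm : (0:ℝ) < ‖(x:E3)‖ := norm_pos_iff.2 hx
      have := hG ((homeomorphUnitSphereProd E3) x).1 ‖(x:E3)‖ hnorm
      rw [homeomorphUnitSphereProd_apply_fst_coe] at this
      rw [smul_inv_smul₀ hnorm.ne'] at this
      simpa using this
    _ = (∫ u, g u ∂sphereMeasure) * ∫ r : Ioi (0:ℝ), w r ∂(Measure.volumeIoiPow 2) := by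
      rw [integral_prod_mul (μ := (volume : Measure E3).toSphere)
        (ν := Measure.volumeIoiPow 2) (f := fun u => g u) (g := fun r : Ioi (0:ℝ) => w r)]
      rfl
    _ = (∫ u, g u ∂sphereMeasure) * ∫ r in Ioi (0:ℝ), r ^ 2 * w r := by
      congr 1
      simp only [Measure.volumeIoiPow, ENNReal.ofReal]
      rw [integral_withDensity_eq_integral_smul
        (f := fun r : Ioi (0:ℝ) => Real.toNNReal (r.1 ^ 2))
        ((measurable_subtype_coe.pow_const _).real_toNNReal) (fun r : Ioi (0:ℝ) => w r),
        integral_subtype_comap measurableSet_Ioi fun a : ℝ ↦ Real.toNNReal (a ^ 2) • w a]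
      refine setIntegral_congr_fun measurableSet_Ioi fun x hx ↦ ?_
      rw [NNReal.smul_def, Real.coe_toNNReal _ (pow_nonneg hx.out.le _), smul_eq_mul]

lemma integrableOn_pow_exp (n : ℕ) :
    IntegrableOn (fun r : ℝ => r ^ n * Real.exp (-r ^ 2)) (Ioi 0) := by
  have h := integrableOn_rpow_mul_exp_neg_mul_sq (b := 1) one_pos
    (s := (n : ℝ)) (lt_of_lt_of_le neg_one_lt_zero (Nat.cast_nonneg n))
  refine (h.congr_fun (fun x hx => ?_) measurableSet_Ioi)
  simp only [Real.rpow_natCast, neg_one_mul]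

lemma gauss_pos (n : ℕ) :
    0 < ∫ r in Ioi (0:ℝ), r ^ n * Real.exp (-r ^ 2) := by
  rw [setIntegral_pos_iff_support_of_nonneg_ae]
  · have hsub : Ioi (0:ℝ) ⊆ Function.support (fun r : ℝ => r ^ n * Real.exp (-r ^ 2)) ∩ Ioi 0 := by
      intro x hx
      refine ⟨?_, hx⟩
      have hx' : (0:ℝ) < x := hx
      have : (0:ℝ) < x ^ n * Real.exp (-x ^ 2) := by positivity
      exact fun h => by simp [h] at this
    calc (0:ℝ≥0∞) < volume (Ioi (0:ℝ)) := by simp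
      _ ≤ _ := measure_mono hsub
  · filter_upwards [ae_restrict_mem measurableSet_Ioi] with x hx
    have hx' : (0:ℝ) < x := hx
    positivity
  · exact integrableOn_pow_exp n

lemma gauss_rec (n : ℕ) :
    ∫ r in Ioi (0:ℝ), r ^ (n+2) * Real.exp (-r ^ 2)
      = ((n+1 : ℝ)/2) * ∫ r in Ioi (0:ℝ), r ^ n * Real.exp (-r ^ 2) := by
  set f : ℝ → ℝ := fun r => -(1/2) * (r ^ (n+1) * Real.exp (-r ^ 2)) with hf
  set f' : ℝ → ℝ := fun r =>
    r ^ (n+2) * Real.exp (-r ^ 2) - ((n+1 : ℝ)/2) * (r ^ n * Real.exp (-r ^ 2)) with hf'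
  have hderiv : ∀ x ∈ Ici (0:ℝ), HasDerivAt f (f' x) x := by
    intro x _
    have h1 : HasDerivAt (fun r : ℝ => r ^ (n+1)) ((n+1 : ℝ) * x ^ n) x := by
      simpa using hasDerivAt_pow (n+1) x
    have h2 : HasDerivAt (fun r : ℝ => Real.exp (-r ^ 2)) (Real.exp (-x ^ 2) * (-(2*x))) x := by
      have hx2 : HasDerivAt (fun r : ℝ => -r ^ 2) (-(2*x)) x := by
        simpa using (hasDerivAt_pow 2 x).fun_neg
      exact (Real.hasDerivAt_exp _).comp x hx2
    have := ((h1.fun_mul h2).const_mul (-(1/2) : ℝ))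
    refine this.congr_deriv ?_
    simp only [hf']
    ring
  have hint : IntegrableOn f' (Ioi (0:ℝ)) :=
    (integrableOn_pow_exp (n+2)).sub ((integrableOn_pow_exp n).const_mul _)
  have htend : Tendsto f atTop (𝓝 0) := by
    have ho : (fun x : ℝ => x ^ ((n+1 : ℕ) : ℝ) * Real.exp (-1 * x ^ 2)) =o[atTop]
        (fun x : ℝ => Real.exp (-(1/2) * x)) :=
      rpow_mul_exp_neg_mul_sq_isLittleO_exp_neg one_pos _
    have hg : Tendsto (fun x : ℝ => Real.exp (-(1/2) * x)) atTop (𝓝 0) := by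
      apply Real.tendsto_exp_atBot.comp
      exact Tendsto.const_mul_atTop_of_neg (by norm_num) tendsto_id
    have h0 : Tendsto (fun x : ℝ => x ^ (n+1) * Real.exp (-x ^ 2)) atTop (𝓝 0) := by
      have := ho.trans_isBigO (Asymptotics.isBigO_refl _ _) |>.isBigO.trans_tendsto hg
      refine this.congr' ?_
      filter_upwards [eventually_gt_atTop (0:ℝ)] with x hx
      rw [Real.rpow_natCast, neg_one_mul]
    simpa [hf] using (h0.const_mul (-(1/2) : ℝ)).congr (fun x => rfl) |>.congr (fun x => rfl)
      |>.mono_right (by simp [nhds_eq_nhds_iff] <;> norm_num)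
  have key := integral_Ioi_of_hasDerivAt_of_tendsto' hderiv hint htend
  have hf0 : f 0 = 0 := by simp [hf]
  rw [hf0, sub_zero] at key
  have hsplit : ∫ r in Ioi (0:ℝ), f' r
      = (∫ r in Ioi (0:ℝ), r ^ (n+2) * Real.exp (-r ^ 2))
        - ((n+1 : ℝ)/2) * ∫ r in Ioi (0:ℝ), r ^ n * Real.exp (-r ^ 2) := by
    rw [hf']
    rw [integral_sub (integrableOn_pow_exp (n+2)) ((integrableOn_pow_exp n).const_mul _),
      integral_const_mul]
  rw [key] at hsplit
  linarith
lemma euclid_gauss (m : ℕ) (n₀ : E3) (hn₀ : ‖n₀‖ = 1) :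
    ∫ x : E3, (⟪x, n₀⟫ : ℝ) ^ (2*m) * Real.exp (-‖x‖ ^ 2)
      = (∫ t : ℝ, t ^ (2*m) * Real.exp (-t ^ 2)) * Real.pi := by
  -- get an orthonormal basis with b 0 = n₀
  have hcard : Module.finrank ℝ E3 = Fintype.card (Fin 3) := by
    simp [finrank_euclideanSpace_fin]
  have horth : Orthonormal ℝ (({0} : Set (Fin 3)).restrict (fun _ : Fin 3 => n₀)) := by
    constructor
    · intro i; exact hn₀
    · intro i j hij
      exact absurd (Subtype.ext (i.2.trans j.2.symm)) hij
  obtain ⟨b, hb⟩ := horth.exists_orthonormalBasis_extension_of_card_eq hcard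
  have hb0 : b 0 = n₀ := hb 0 rfl
  -- rewrite integrand through b.repr
  have h1 : ∀ x : E3, (⟪x, n₀⟫ : ℝ) ^ (2*m) * Real.exp (-‖x‖ ^ 2)
      = (b.repr x 0) ^ (2*m) * Real.exp (-‖b.repr x‖ ^ 2) := by
    intro x
    rw [b.repr.norm_map, b.repr_apply_apply, hb0, real_inner_comm]
  simp_rw [h1]
  rw [b.measurePreserving_repr.integral_comp
    (b.repr.toHomeomorph.measurableEmbedding) (fun y => (y 0) ^ (2*m) * Real.exp (-‖y‖ ^ 2))]
  -- go to the pi measure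
  rw [← ((EuclideanSpace.volume_preserving_symm_measurableEquiv_toLp (Fin 3)).symm).integral_comp
    (MeasurableEquiv.measurableEmbedding _) (fun y : E3 => (y 0) ^ (2*m) * Real.exp (-‖y‖ ^ 2))]
  have h2 : ∀ z : Fin 3 → ℝ,
      (((MeasurableEquiv.toLp 2 (Fin 3 → ℝ)) z) 0) ^ (2*m)
        * Real.exp (-‖(MeasurableEquiv.toLp 2 (Fin 3 → ℝ)) z‖ ^ 2)
      = (z 0 ^ (2*m) * Real.exp (-(z 0) ^ 2)) * (Real.exp (-(z 1) ^ 2) * Real.exp (-(z 2) ^ 2)) := by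
    intro z
    have hz : ((MeasurableEquiv.toLp 2 (Fin 3 → ℝ)) z : E3) = WithLp.toLp 2 z := rfl
    have hcoord : ∀ i, ((MeasurableEquiv.toLp 2 (Fin 3 → ℝ)) z : E3) i = z i := by
      intro i; rw [hz]
    have hnorm : ‖(MeasurableEquiv.toLp 2 (Fin 3 → ℝ)) z‖ ^ 2
        = (z 0) ^ 2 + (z 1) ^ 2 + (z 2) ^ 2 := by
      rw [EuclideanSpace.norm_eq]
      rw [Real.sq_sqrt (by positivity)]
      simp_rw [hcoord, Real.norm_eq_abs, sq_abs]
      rw [Fin.sum_univ_three]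
    rw [hnorm, hcoord]
    rw [show -((z 0) ^ 2 + (z 1) ^ 2 + (z 2) ^ 2) = (-(z 0)^2) + (-(z 1)^2) + (-(z 2)^2) by ring,
      Real.exp_add, Real.exp_add]
    ring
  simp_rw [MeasurableEquiv.symm_symm, h2]
  rw [show (fun z : Fin 3 → ℝ => (z 0 ^ (2*m) * Real.exp (-(z 0) ^ 2))
      * (Real.exp (-(z 1) ^ 2) * Real.exp (-(z 2) ^ 2)))
    = fun z : Fin 3 → ℝ => ∏ i : Fin 3,
        (fun i : Fin 3 => fun t : ℝ => if i = 0 then t ^ (2*m) * Real.exp (-t^2)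
          else Real.exp (-t^2)) i (z i) from by
      funext z
      rw [Fin.prod_univ_three]
      simp only [show ((1:Fin 3) = 0) = False from by simp [Fin.ext_iff], show ((2:Fin 3) = 0) = False from by simp [Fin.ext_iff], eq_self_iff_true, if_true, if_false]
      ring]
  rw [MeasureTheory.volume_pi, MeasureTheory.integral_fintype_prod_eq_prod (𝕜 := ℝ) (ι := Fin 3)
    (f := fun i : Fin 3 => fun t : ℝ => if i = 0 then t ^ (2*m) * Real.exp (-t^2)
      else Real.exp (-t^2))]
  rw [Fin.prod_univ_three]
  have hg : ∫ t : ℝ, Real.exp (-t ^ 2) = Real.sqrt Real.pi := by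
    simpa [neg_one_mul] using integral_gaussian 1
  simp only [show ((1:Fin 3) = 0) = False from by simp [Fin.ext_iff], show ((2:Fin 3) = 0) = False from by simp [Fin.ext_iff], eq_self_iff_true, if_true, if_false]
  rw [hg, mul_assoc, Real.mul_self_sqrt Real.pi_nonneg]

lemma sphere_moment (m : ℕ) (n₀ : E3) (hn₀ : ‖n₀‖ = 1) :
    ∫ u : sphere (0:E3) 1, (⟪(u : E3), n₀⟫ : ℝ) ^ (2*m) ∂sphereMeasure
      = 4 * Real.pi / (2*m+1) := by
  have hpolar := polar_formula (fun u => (⟪(u : E3), n₀⟫ : ℝ) ^ (2*m))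
    (fun r => r ^ (2*m) * Real.exp (-r ^ 2))
    (fun x => (⟪x, n₀⟫ : ℝ) ^ (2*m) * Real.exp (-‖x‖ ^ 2))
    (by
      intro u r hr
      have hu : ‖(u : E3)‖ = 1 := mem_sphere_zero_iff_norm.1 u.2
      rw [real_inner_smul_left, norm_smul, hu, Real.norm_eq_abs, abs_of_pos hr, mul_one,
        mul_pow, pow_mul, pow_mul]
      ring)
  rw [euclid_gauss m n₀ hn₀] at hpolar
  have hright : ∫ r in Ioi (0:ℝ), r ^ 2 * (r ^ (2*m) * Real.exp (-r ^ 2))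
      = ((2*m+1 : ℝ)/2) * ∫ r in Ioi (0:ℝ), r ^ (2*m) * Real.exp (-r ^ 2) := by
    rw [show (fun r : ℝ => r ^ 2 * (r ^ (2*m) * Real.exp (-r ^ 2)))
        = fun r : ℝ => r ^ (2*m+2) * Real.exp (-r ^ 2) from by funext r; ring]
    have := gauss_rec (2*m)
    rw [this]
    push_cast
    ring_nf
  have hleft : ∫ t : ℝ, t ^ (2*m) * Real.exp (-t ^ 2)
      = 2 * ∫ r in Ioi (0:ℝ), r ^ (2*m) * Real.exp (-r ^ 2) := by
    rw [← integral_comp_abs (f := fun t : ℝ => t ^ (2*m) * Real.exp (-t ^ 2))]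
    refine integral_congr_ae (Filter.Eventually.of_forall fun t => ?_)
    simp only
    rw [pow_mul, pow_mul, sq_abs]
  rw [hright, hleft] at hpolar
  have hI := gauss_pos (2*m)
  set I := ∫ r in Ioi (0:ℝ), r ^ (2*m) * Real.exp (-r ^ 2)
  have h2m : (2*m+1 : ℝ) ≠ 0 := by positivity
  field_simp at hpolar ⊢
  nlinarith [hpolar, Real.pi_pos]
lemma exp_series_integral {X : Type*} [MeasurableSpace X] (μ : Measure X) [IsFiniteMeasure μ]
    (κ : ℝ) (hκ : 0 ≤ κ) (j : ℕ) (t : X → ℝ) (ht : AEStronglyMeasurable t μ)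
    (hbd : ∀ᵐ x ∂μ, |t x| ≤ 1) :
    ∫ x, (t x) ^ (2*j) * Real.exp (κ * (t x) ^ 2) ∂μ
      = ∑' m : ℕ, κ ^ m / m.factorial * ∫ x, (t x) ^ (2*(m+j)) ∂μ := by
  have hexp : ∀ s : ℝ, s ^ (2*j) * Real.exp (κ * s ^ 2)
      = ∑' m : ℕ, κ ^ m / m.factorial * s ^ (2*(m+j)) := by
    intro s
    rw [Real.exp_eq_exp_ℝ, NormedSpace.exp_eq_tsum_div, ← tsum_mul_left]
    refine tsum_congr fun m => ?_
    rw [mul_pow, ← pow_mul, Nat.mul_add, pow_add]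
    ring
  simp_rw [hexp]
  set F : ℕ → X → ℝ := fun m x => κ ^ m / m.factorial * (t x) ^ (2*(m+j)) with hF
  have hFm : ∀ m, AEStronglyMeasurable (F m) μ := fun m =>
    ((ht.aemeasurable.pow_const (2*(m+j))).aestronglyMeasurable).const_mul _
  have hbound : ∀ m, ∫⁻ x, ‖F m x‖₊ ∂μ ≤ ENNReal.ofReal (κ ^ m / m.factorial) * μ univ := by
    intro m
    have hae : ∀ᵐ x ∂μ, (‖F m x‖₊ : ℝ≥0∞) ≤ ENNReal.ofReal (κ ^ m / m.factorial) := by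
      filter_upwards [hbd] with x hx
      have h1 : ‖F m x‖ ≤ κ ^ m / m.factorial := by
        have hy : |(t x) ^ (2*(m+j))| ≤ 1 := by
          rw [abs_pow]; exact pow_le_one₀ (abs_nonneg _) hx
        calc ‖F m x‖ = (κ ^ m / m.factorial) * |(t x) ^ (2*(m+j))| := by
              rw [hF]; simp only [Real.norm_eq_abs, abs_mul]
              rw [abs_of_nonneg (by positivity : (0:ℝ) ≤ κ ^ m / m.factorial)]
          _ ≤ (κ ^ m / m.factorial) * 1 :=
              mul_le_mul_of_nonneg_left hy (by positivity)
          _ = _ := mul_one _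
      calc (‖F m x‖₊ : ℝ≥0∞) = ENNReal.ofReal ‖F m x‖ := (ofReal_norm_eq_enorm _).symm
        _ ≤ _ := ENNReal.ofReal_le_ofReal h1
    calc ∫⁻ x, ‖F m x‖₊ ∂μ ≤ ∫⁻ _, ENNReal.ofReal (κ ^ m / m.factorial) ∂μ :=
          lintegral_mono_ae hae
      _ = ENNReal.ofReal (κ ^ m / m.factorial) * μ univ := by rw [lintegral_const]
  have hsum : ∑' m, ∫⁻ x, ‖F m x‖₊ ∂μ ≠ ⊤ := by
    refine ne_top_of_le_ne_top ?_ (ENNReal.tsum_le_tsum hbound)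
    rw [ENNReal.tsum_mul_right]
    refine ENNReal.mul_ne_top ?_ (measure_ne_top μ univ)
    rw [← ENNReal.ofReal_tsum_of_nonneg (fun m => by positivity)
      (Real.summable_pow_div_factorial κ)]
    exact ENNReal.ofReal_ne_top
  rw [integral_tsum hFm hsum]
  exact tsum_congr fun m => integral_const_mul _ _

noncomputable instance : IsFiniteMeasure sphereMeasure := by
  unfold sphereMeasure; infer_instance

lemma sphere_series (κ : ℝ) (hκ : 0 ≤ κ) (j : ℕ) (n₀ : E3) (hn₀ : ‖n₀‖ = 1) :
    ∫ u : sphere (0:E3) 1, (⟪(u : E3), n₀⟫ : ℝ) ^ (2*j)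
        * Real.exp (κ * (⟪(u : E3), n₀⟫ : ℝ) ^ 2) ∂sphereMeasure
      = ∑' m : ℕ, κ ^ m / m.factorial * (4 * Real.pi / (2*(m+j)+1)) := by
  rw [exp_series_integral sphereMeasure κ hκ j (fun u => (⟪(u : E3), n₀⟫ : ℝ))
    ((continuous_subtype_val.inner continuous_const).aestronglyMeasurable)
    (Filter.Eventually.of_forall fun u => by
      calc |(⟪(u : E3), n₀⟫ : ℝ)| ≤ ‖(u : E3)‖ * ‖n₀‖ := abs_real_inner_le_norm _ _
        _ = 1 := by rw [mem_sphere_zero_iff_norm.1 u.2, hn₀, one_mul])]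
  refine tsum_congr fun m => ?_
  rw [sphere_moment (m+j) n₀ hn₀]
  push_cast
  ring

lemma interval_series (κ : ℝ) (hκ : 0 ≤ κ) (j : ℕ) :
    ∫ s in (0:ℝ)..1, s ^ (2*j) * Real.exp (κ * s ^ 2)
      = ∑' m : ℕ, κ ^ m / m.factorial * (1 / (2*(m+j)+1)) := by
  haveI : IsFiniteMeasure (volume.restrict (Ioc (0:ℝ) 1)) :=
    ⟨by rw [Measure.restrict_apply_univ]; simp⟩
  rw [intervalIntegral.integral_of_le zero_le_one]
  rw [exp_series_integral (volume.restrict (Ioc (0:ℝ) 1)) κ hκ j (fun s => s)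
    aestronglyMeasurable_id
    (by
      filter_upwards [ae_restrict_mem measurableSet_Ioc] with x hx
      rw [abs_of_pos hx.1]; exact hx.2)]
  refine tsum_congr fun m => ?_
  congr 1
  rw [← intervalIntegral.integral_of_le zero_le_one, integral_pow]
  push_cast
  norm_num

lemma ftc_exp (κ : ℝ) :
    Real.exp κ = (∫ s in (0:ℝ)..1, Real.exp (κ * s ^ 2))
      + 2 * κ * ∫ s in (0:ℝ)..1, s ^ 2 * Real.exp (κ * s ^ 2) := by
  have hderiv : ∀ s ∈ uIcc (0:ℝ) 1, HasDerivAt (fun s : ℝ => s * Real.exp (κ * s ^ 2))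
      (Real.exp (κ * s ^ 2) + 2 * κ * (s ^ 2 * Real.exp (κ * s ^ 2))) s := by
    intro s _
    have h2 : HasDerivAt (fun s : ℝ => κ * s ^ 2) (κ * (2 * s)) s := by
      simpa using (hasDerivAt_pow 2 s).const_mul κ
    have := (hasDerivAt_id s).fun_mul ((Real.hasDerivAt_exp _).comp s h2)
    refine this.congr_deriv ?_
    simp only [Function.comp_apply, Function.comp_def, id_eq, one_mul]
    ring
  have hcont : Continuous fun s : ℝ =>
      Real.exp (κ * s ^ 2) + 2 * κ * (s ^ 2 * Real.exp (κ * s ^ 2)) := by continuity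
  have key := intervalIntegral.integral_eq_sub_of_hasDerivAt hderiv
    (hcont.intervalIntegrable 0 1)
  have h1 : Continuous fun s : ℝ => Real.exp (κ * s ^ 2) := by continuity
  have h2 : Continuous fun s : ℝ => s ^ 2 * Real.exp (κ * s ^ 2) := by continuity
  rw [intervalIntegral.integral_add (h1.intervalIntegrable 0 1)
    (by exact (continuous_const.mul h2).intervalIntegrable 0 1 : IntervalIntegrable (fun s : ℝ => 2 * κ * (s ^ 2 * Real.exp (κ * s ^ 2))) volume 0 1)] at key
  rw [intervalIntegral.integral_const_mul] at key
  rw [key]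
  norm_num

lemma P_pos (κ : ℝ) : 0 < ∫ s in (0:ℝ)..1, Real.exp (κ * s ^ 2) := by
  refine intervalIntegral.intervalIntegral_pos_of_pos_on
    ((by continuity : Continuous fun s : ℝ => Real.exp (κ * s ^ 2)).intervalIntegrable 0 1)
    (fun x _ => Real.exp_pos _) one_pos

lemma erfi_sqrt (κ : ℝ) (hκ : 0 < κ) :
    Erfi (Real.sqrt κ) = 2 / Real.sqrt Real.pi
      * (Real.sqrt κ * ∫ s in (0:ℝ)..1, Real.exp (κ * s ^ 2)) := by
  rw [Erfi]
  congr 1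
  have := intervalIntegral.smul_integral_comp_mul_left (a := (0:ℝ)) (b := 1)
    (fun t => Real.exp (t ^ 2)) (Real.sqrt κ)
  rw [mul_zero, mul_one] at this
  rw [← this, smul_eq_mul]
  congr 1
  refine intervalIntegral.integral_congr fun s _ => ?_
  rw [mul_pow, Real.sq_sqrt hκ.le]

end OOWatson

/-- For the Watson distribution
`f(u) = exp(κ (uᵀn₀)²) / (4π M(1/2,3/2,κ))` with `κ > 0`,
`OO(n₀) = 3eᵏ/(2√(κπ) Erfi(√κ)) - (3+2κ)/(4κ)`. -/
theorem oo_watson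
    (κ : ℝ) (hκ : 0 < κ)
    (n₀ : EuclideanSpace ℝ (Fin 3)) (hn₀ : ‖n₀‖ = 1)
    (f : sphere (0 : EuclideanSpace ℝ (Fin 3)) 1 → ℝ)
    (hf : ∀ u, f u = 1 / (4 * Real.pi * Mkummer κ) *
      Real.exp (κ * (⟪(u : EuclideanSpace ℝ (Fin 3)), n₀⟫ : ℝ) ^ 2)) :
    (∫ u, (3 * (⟪(u : EuclideanSpace ℝ (Fin 3)), n₀⟫ : ℝ) ^ 2 - 1) / 2 * f u
        ∂sphereMeasure)
      = 3 * Real.exp κ / (2 * Real.sqrt (κ * Real.pi) * Erfi (Real.sqrt κ))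
        - (3 + 2 * κ) / (4 * κ) := by
  set P : ℝ := ∫ s in (0:ℝ)..1, Real.exp (κ * s ^ 2) with hP
  set Q : ℝ := ∫ s in (0:ℝ)..1, s ^ 2 * Real.exp (κ * s ^ 2) with hQ
  have hPpos : 0 < P := OOWatson.P_pos κ
  have hA : (∫ u : sphere (0 : EuclideanSpace ℝ (Fin 3)) 1,
      Real.exp (κ * (⟪(u : EuclideanSpace ℝ (Fin 3)), n₀⟫ : ℝ) ^ 2) ∂sphereMeasure)
      = 4 * Real.pi * P := by
    have h1 := OOWatson.sphere_series κ hκ.le 0 n₀ hn₀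
    have h2 := OOWatson.interval_series κ hκ.le 0
    simp only [mul_zero, pow_zero, one_mul, Nat.cast_zero, add_zero] at h1 h2
    rw [h1, hP, h2, ← tsum_mul_left]
    exact tsum_congr fun m => by ring
  have hB : (∫ u : sphere (0 : EuclideanSpace ℝ (Fin 3)) 1,
      (⟪(u : EuclideanSpace ℝ (Fin 3)), n₀⟫ : ℝ) ^ 2
        * Real.exp (κ * (⟪(u : EuclideanSpace ℝ (Fin 3)), n₀⟫ : ℝ) ^ 2) ∂sphereMeasure)
      = 4 * Real.pi * Q := by
    have h1 := OOWatson.sphere_series κ hκ.le 1 n₀ hn₀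
    have h2 := OOWatson.interval_series κ hκ.le 1
    simp only [mul_one, pow_one, Nat.cast_one] at h1 h2
    rw [h1, hQ, h2, ← tsum_mul_left]
    exact tsum_congr fun m => by ring
  have hcontin : Continuous fun u : sphere (0 : EuclideanSpace ℝ (Fin 3)) 1 =>
      (⟪(u : EuclideanSpace ℝ (Fin 3)), n₀⟫ : ℝ) :=
    continuous_subtype_val.inner continuous_const
  have hcont0 : Continuous fun u : sphere (0 : EuclideanSpace ℝ (Fin 3)) 1 =>
      Real.exp (κ * (⟪(u : EuclideanSpace ℝ (Fin 3)), n₀⟫ : ℝ) ^ 2) :=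
    Real.continuous_exp.comp ((continuous_const.mul (hcontin.pow 2)))
  have hcont2 : Continuous fun u : sphere (0 : EuclideanSpace ℝ (Fin 3)) 1 =>
      (⟪(u : EuclideanSpace ℝ (Fin 3)), n₀⟫ : ℝ) ^ 2
        * Real.exp (κ * (⟪(u : EuclideanSpace ℝ (Fin 3)), n₀⟫ : ℝ) ^ 2) :=
    (hcontin.pow 2).mul hcont0
  have hint0 : Integrable (fun u : sphere (0 : EuclideanSpace ℝ (Fin 3)) 1 =>
      Real.exp (κ * (⟪(u : EuclideanSpace ℝ (Fin 3)), n₀⟫ : ℝ) ^ 2)) sphereMeasure :=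
    hcont0.integrable_of_hasCompactSupport (HasCompactSupport.of_compactSpace _)
  have hint2 : Integrable (fun u : sphere (0 : EuclideanSpace ℝ (Fin 3)) 1 =>
      (⟪(u : EuclideanSpace ℝ (Fin 3)), n₀⟫ : ℝ) ^ 2
        * Real.exp (κ * (⟪(u : EuclideanSpace ℝ (Fin 3)), n₀⟫ : ℝ) ^ 2)) sphereMeasure :=
    hcont2.integrable_of_hasCompactSupport (HasCompactSupport.of_compactSpace _)
  set c : ℝ := 1 / (4 * Real.pi * Mkummer κ) with hc
  have hsplit : (∫ u, (3 * (⟪(u : EuclideanSpace ℝ (Fin 3)), n₀⟫ : ℝ) ^ 2 - 1) / 2 * f u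
      ∂sphereMeasure)
      = c * (3/2) * (4 * Real.pi * Q) - c * (1/2) * (4 * Real.pi * P) := by
    rw [← hA, ← hB]
    have heq : (fun u : sphere (0 : EuclideanSpace ℝ (Fin 3)) 1 =>
        (3 * (⟪(u : EuclideanSpace ℝ (Fin 3)), n₀⟫ : ℝ) ^ 2 - 1) / 2 * f u)
        = fun u : sphere (0 : EuclideanSpace ℝ (Fin 3)) 1 =>
          (c * (3/2)) * ((⟪(u : EuclideanSpace ℝ (Fin 3)), n₀⟫ : ℝ) ^ 2
            * Real.exp (κ * (⟪(u : EuclideanSpace ℝ (Fin 3)), n₀⟫ : ℝ) ^ 2))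
          - (c * (1/2)) * Real.exp (κ * (⟪(u : EuclideanSpace ℝ (Fin 3)), n₀⟫ : ℝ) ^ 2) := by
      funext u
      rw [hf u]
      ring
    rw [heq, integral_sub ((hint2.const_mul _)) ((hint0.const_mul _)),
      integral_const_mul, integral_const_mul]
  rw [hsplit]
  have hsqrtκ : (0:ℝ) < Real.sqrt κ := Real.sqrt_pos.2 hκ
  have hsqrtπ : (0:ℝ) < Real.sqrt Real.pi := Real.sqrt_pos.2 Real.pi_pos
  have hErfi : Erfi (Real.sqrt κ) = 2 / Real.sqrt Real.pi * (Real.sqrt κ * P) :=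
    OOWatson.erfi_sqrt κ hκ
  have hMk : Mkummer κ = P := by
    rw [Mkummer, hErfi]
    field_simp
  have hexpκ : Real.exp κ = P + 2 * κ * Q := OOWatson.ftc_exp κ
  have hκP : Real.sqrt κ * Real.sqrt κ = κ := Real.mul_self_sqrt hκ.le
  have hsqrtmul : Real.sqrt (κ * Real.pi) = Real.sqrt κ * Real.sqrt Real.pi :=
    Real.sqrt_mul hκ.le _
  have hπ : (0:ℝ) < Real.pi := Real.pi_pos
  rw [hc, hMk, hErfi, hexpκ, hsqrtmul]
  have hden : 2 * (Real.sqrt κ * Real.sqrt Real.pi)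
      * (2 / Real.sqrt Real.pi * (Real.sqrt κ * P)) = 4 * κ * P := by
    field_simp
    linear_combination 4 * hκP
  rw [hden]
  field_simp
  ring
end

section
/- The tensor ODF $\Phi(u) = \frac{1}{4\pi |D|^{1/2}}(u^T D^{-1} u)^{-3/2}$ of a symmetric positive definite $3\times 3$ matrix $D$ has unit integral over the unit sphere: $\int_{\mathbb{S}^2} \Phi(u)\, du = 1$. -/
open MeasureTheory Metric Matrix
open scoped RealInnerProductSpace

section TensorODFAux

open Set Real
open scoped ENNReal

noncomputable section

local notation "E3" => EuclideanSpace ℝ (Fin 3)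

/-- quadratic form of a matrix on `E3`. -/
private def qf (M : Matrix (Fin 3) (Fin 3) ℝ) (x : EuclideanSpace ℝ (Fin 3)) : ℝ :=
  (fun i => x i) ⬝ᵥ M.mulVec (fun i => x i)

private lemma qf_continuous (M : Matrix (Fin 3) (Fin 3) ℝ) : Continuous (qf M) := by
  unfold qf dotProduct Matrix.mulVec dotProduct
  fun_prop

private lemma qf_smul (M : Matrix (Fin 3) (Fin 3) ℝ) (r : ℝ) (x : E3) :
    qf M (r • x) = r ^ 2 * qf M x := by
  unfold qf
  have h1 : (fun i => (r • x) i) = r • (fun i => x i) := rfl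
  rw [h1, Matrix.mulVec_smul, smul_dotProduct, dotProduct_smul, smul_eq_mul, smul_eq_mul]
  ring

private lemma qf_nonneg {M : Matrix (Fin 3) (Fin 3) ℝ} (hM : M.PosDef) (x : E3) :
    0 ≤ qf M x := by
  have := hM.posSemidef.dotProduct_mulVec_nonneg (fun i => x i)
  simpa [qf] using this

private lemma qf_pos {M : Matrix (Fin 3) (Fin 3) ℝ} (hM : M.PosDef)
    (u : sphere (0 : E3) 1) : 0 < qf M (u : E3) := by
  have hu0 : (u : E3) ≠ 0 := ne_of_mem_sphere u.2 one_ne_zero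
  have hu : (fun i => (u : E3) i) ≠ 0 := fun h => hu0 (by ext i; exact congrFun h i)
  have := hM.dotProduct_mulVec_pos hu
  simpa [qf] using this

private lemma qf_one (x : E3) : qf 1 x = ∑ i, x i * x i := by
  simp [qf, Matrix.one_mulVec, dotProduct]

private lemma qf_one_sphere (u : sphere (0 : E3) 1) : qf 1 (u : E3) = 1 := by
  rw [qf_one]
  have hn : ‖(u : E3)‖ = 1 := mem_sphere_zero_iff_norm.mp u.2
  rw [EuclideanSpace.norm_eq] at hn
  have h1 : ∑ i, ‖(u : E3) i‖ ^ 2 = 1 := by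
    have hnn : (0:ℝ) ≤ ∑ i, ‖(u : E3) i‖ ^ 2 :=
      Finset.sum_nonneg fun i _ => sq_nonneg _
    nlinarith [Real.sq_sqrt hnn]
  calc ∑ i, (u : E3) i * (u : E3) i = ∑ i, ‖(u : E3) i‖ ^ 2 := by
        refine Finset.sum_congr rfl fun i _ => ?_
        rw [Real.norm_eq_abs, sq_abs, sq]
    _ = 1 := h1

private lemma lintegral_polar (g : E3 → ℝ≥0∞) (hg : Measurable g) :
    ∫⁻ x, g x = ∫⁻ u : sphere (0 : E3) 1, ∫⁻ r in Ioi (0 : ℝ),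
      ENNReal.ofReal (r ^ 2) * g (r • (u : E3)) ∂volume
      ∂(volume : Measure E3).toSphere := by
  have hdim : Module.finrank ℝ E3 = 3 := finrank_euclideanSpace_fin
  have hcont : Continuous fun p : sphere (0 : E3) 1 × Ioi (0 : ℝ) =>
      ((p.2 : ℝ) • (p.1 : E3)) :=
    ((continuous_subtype_val.comp continuous_snd).smul
      (continuous_subtype_val.comp continuous_fst))
  have hmeasF : Measurable fun p : sphere (0 : E3) 1 × Ioi (0 : ℝ) =>
      g ((p.2 : ℝ) • (p.1 : E3)) := hg.comp hcont.measurable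
  calc
    ∫⁻ x, g x ∂(volume : Measure E3)
        = ∫⁻ x in ({0}ᶜ : Set E3), g x ∂volume := by
          rw [MeasureTheory.restrict_compl_singleton]
    _ = ∫⁻ x : ({0}ᶜ : Set E3), g x ∂((volume : Measure E3).comap Subtype.val) :=
          (lintegral_subtype_comap (measurableSet_singleton 0).compl g).symm
    _ = ∫⁻ p : sphere (0 : E3) 1 × Ioi (0 : ℝ), g ((p.2 : ℝ) • (p.1 : E3))
          ∂((volume : Measure E3).toSphere.prod (.volumeIoiPow 2)) := by
          rw [show (2 : ℕ) = Module.finrank ℝ E3 - 1 by rw [hdim]]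
          rw [← (Measure.measurePreserving_homeomorphUnitSphereProd
            (volume : Measure E3)).lintegral_comp hmeasF]
          refine lintegral_congr fun x => ?_
          congr 1
          have hx : ‖(x : E3)‖ ≠ 0 := norm_ne_zero_iff.2 x.2
          simp [homeomorphUnitSphereProd, smul_inv_smul₀ hx]
    _ = ∫⁻ u : sphere (0 : E3) 1, ∫⁻ r : Ioi (0 : ℝ), g ((r : ℝ) • (u : E3))
          ∂(Measure.volumeIoiPow 2) ∂(volume : Measure E3).toSphere :=
          lintegral_prod _ hmeasF.aemeasurable
    _ = _ := by
          refine lintegral_congr fun u => ?_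
          have hmr : Measurable fun r : Ioi (0 : ℝ) => g ((r : ℝ) • (u : E3)) :=
            hg.comp ((continuous_subtype_val.smul continuous_const).measurable)
          have hfm : Measurable fun r : Ioi (0 : ℝ) => ENNReal.ofReal ((r : ℝ) ^ 2) := by
            fun_prop
          rw [Measure.volumeIoiPow, lintegral_withDensity_eq_lintegral_mul _ hfm hmr]
          simp only [Pi.mul_apply]
          exact lintegral_subtype_comap measurableSet_Ioi
            (fun r : ℝ => ENNReal.ofReal (r ^ 2) * g (r • (u : E3)))

private lemma radial (b : ℝ) (hb : 0 < b) :
    (∫⁻ r in Ioi (0 : ℝ), ENNReal.ofReal (r ^ 2) *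
        ENNReal.ofReal (Real.exp (-(b * r ^ 2)))) =
      ENNReal.ofReal (b ^ (-(3 : ℝ) / 2) * ((1 / 2) * Real.Gamma (3 / 2))) := by
  have h1 : ∀ r : ℝ, ENNReal.ofReal (r ^ 2) * ENNReal.ofReal (Real.exp (-(b * r ^ 2)))
      = ENNReal.ofReal (r ^ 2 * Real.exp (-b * r ^ 2)) := by
    intro r
    rw [← ENNReal.ofReal_mul (sq_nonneg r), neg_mul]
  simp only [h1]
  have hInt : IntegrableOn (fun r : ℝ => r ^ 2 * Real.exp (-b * r ^ 2)) (Ioi 0) := by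
    have := integrableOn_rpow_mul_exp_neg_mul_sq hb (s := 2) (by norm_num)
    refine this.congr_fun (fun x hx => ?_) measurableSet_Ioi
    beta_reduce
    rw [show ((2:ℝ)) = ((2:ℕ):ℝ) by norm_num, Real.rpow_natCast]
  rw [← ofReal_integral_eq_lintegral_ofReal hInt
    (Filter.Eventually.of_forall fun r => by positivity)]
  congr 1
  have h2 : ∫ r in Ioi (0:ℝ), r ^ 2 * Real.exp (-b * r ^ 2)
      = ∫ r in Ioi (0:ℝ), r ^ (2:ℝ) * Real.exp (-b * r ^ (2:ℝ)) := by
    refine setIntegral_congr_fun measurableSet_Ioi fun x hx => ?_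
    rw [show ((2:ℝ)) = ((2:ℕ):ℝ) by norm_num, Real.rpow_natCast]
  rw [h2, integral_rpow_mul_exp_neg_mul_rpow (by norm_num) (by norm_num) hb]
  norm_num
  ring

private lemma sphere_total :
    (volume : Measure (EuclideanSpace ℝ (Fin 3))).toSphere univ
      = ENNReal.ofReal (4 * Real.pi) := by
  rw [Measure.toSphere_apply_univ, EuclideanSpace.volume_ball]
  have hdim : Module.finrank ℝ (EuclideanSpace ℝ (Fin 3)) = 3 := finrank_euclideanSpace_fin
  rw [hdim]
  have hcard : (Fintype.card (Fin 3)) = 3 := by simp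
  rw [hcard]
  have hG : Real.Gamma ((3:ℕ) / 2 + 1) = 3 / 4 * Real.sqrt π := by
    have h32 : ((3:ℕ):ℝ) / 2 + 1 = 3 / 2 + 1 := by norm_num
    rw [h32, Real.Gamma_add_one (by norm_num)]
    have : (3:ℝ)/2 = 1/2 + 1 := by norm_num
    rw [this, Real.Gamma_add_one (by norm_num), Real.Gamma_one_half_eq]
    ring
  rw [hG]
  have hs : Real.sqrt π ^ 3 / (3 / 4 * Real.sqrt π) = 4 / 3 * π := by
    have h : Real.sqrt π ^ 3 = π * Real.sqrt π := by
      rw [pow_succ, sq_sqrt pi_nonneg]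
    rw [h]
    field_simp [Real.sqrt_ne_zero'.2 pi_pos]
  rw [hs]
  rw [ENNReal.ofReal_one, one_pow, one_mul]
  rw [show ((3:ℕ) : ℝ≥0∞) = ENNReal.ofReal 3 by simp, ← ENNReal.ofReal_mul (by norm_num)]
  norm_num
  rw [← ENNReal.ofReal_mul (by norm_num), show (3:ENNReal) = ENNReal.ofReal 3 by simp,
    ← ENNReal.ofReal_mul (by positivity), show (4:ENNReal) = ENNReal.ofReal 4 by simp,
    ← ENNReal.ofReal_mul (by norm_num : (0:ℝ) ≤ 4)]
  ring_nf

private lemma det_toEuclideanLin (S : Matrix (Fin 3) (Fin 3) ℝ) :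
    LinearMap.det (Matrix.toEuclideanLin S : E3 →ₗ[ℝ] E3) = S.det := by
  have h : (Matrix.toEuclideanLin S : E3 →ₗ[ℝ] E3)
      = ((WithLp.linearEquiv 2 ℝ (Fin 3 → ℝ)).symm : (Fin 3 → ℝ) →ₗ[ℝ] E3)
        ∘ₗ (Matrix.toLin' S)
        ∘ₗ ((WithLp.linearEquiv 2 ℝ (Fin 3 → ℝ)) : E3 →ₗ[ℝ] (Fin 3 → ℝ)) := rfl
  rw [h]
  have := LinearMap.det_conj (Matrix.toLin' S) (WithLp.linearEquiv 2 ℝ (Fin 3 → ℝ)).symm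
  simpa [LinearMap.det_toLin'] using this

private lemma lintegral_comp_linear (S : Matrix (Fin 3) (Fin 3) ℝ) (hdet : S.det ≠ 0)
    (g : E3 → ℝ≥0∞) (hg : Measurable g) :
    ∫⁻ x, g (Matrix.toEuclideanLin S x) = ENNReal.ofReal |S.det|⁻¹ * ∫⁻ x, g x := by
  set T : E3 →ₗ[ℝ] E3 := (Matrix.toEuclideanLin S : E3 →ₗ[ℝ] E3)
  have hTdet : LinearMap.det T ≠ 0 := by rw [det_toEuclideanLin]; exact hdet
  have hTm : Measurable T := T.continuous_of_finiteDimensional.measurable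
  have hmap := Measure.map_linearMap_addHaar_eq_smul_addHaar (volume : Measure E3) hTdet
  have h1 : ∫⁻ x, g x ∂(Measure.map T volume) = ∫⁻ x, g (T x) ∂volume :=
    lintegral_map hg hTm
  rw [← h1, hmap, lintegral_smul_measure, det_toEuclideanLin, abs_inv, smul_eq_mul]

private lemma key {M : Matrix (Fin 3) (Fin 3) ℝ} (hM : M.PosDef) :
    ∫⁻ x : E3, ENNReal.ofReal (Real.exp (-(qf M x)))
      = (∫⁻ u : sphere (0 : E3) 1, ENNReal.ofReal (qf M (u : E3) ^ (-(3:ℝ)/2))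
          ∂(volume : Measure E3).toSphere)
        * ENNReal.ofReal ((1/2) * Real.Gamma (3/2)) := by
  have hgm : Measurable fun x : E3 => ENNReal.ofReal (Real.exp (-(qf M x))) :=
    (ENNReal.continuous_ofReal.comp
      (Real.continuous_exp.comp (qf_continuous M).neg)).measurable
  rw [lintegral_polar _ hgm]
  have hinner : ∀ u : sphere (0 : E3) 1,
      (∫⁻ r in Ioi (0:ℝ), ENNReal.ofReal (r ^ 2) *
          ENNReal.ofReal (Real.exp (-(qf M (r • (u : E3))))))
      = ENNReal.ofReal (qf M (u : E3) ^ (-(3:ℝ)/2))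
        * ENNReal.ofReal ((1/2) * Real.Gamma (3/2)) := by
    intro u
    have hq := qf_pos hM u
    have hsm : ∀ r : ℝ, qf M (r • (u : E3)) = qf M (u : E3) * r ^ 2 := fun r => by
      rw [qf_smul]; ring
    simp only [hsm]
    rw [radial _ hq, ENNReal.ofReal_mul (Real.rpow_nonneg hq.le _)]
  simp only [hinner]
  rw [lintegral_mul_const]
  exact (ENNReal.continuous_ofReal.comp
    (((qf_continuous M).comp continuous_subtype_val).rpow_const
      fun u => Or.inl (qf_pos hM u).ne')).measurable

end

end TensorODFAux

/-- The tensor ODF `Φ(u) = (4π |D|^{1/2})⁻¹ (uᵀ D⁻¹ u)^{-3/2}`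
of a symmetric positive definite `D` has unit integral over the unit
sphere. -/
theorem tensor_odf_unit_integral
    (D : Matrix (Fin 3) (Fin 3) ℝ) (hD : D.PosDef) :
    (∫ u : sphere (0 : EuclideanSpace ℝ (Fin 3)) 1,
        1 / (4 * Real.pi * Real.sqrt D.det) *
          (((fun i => (u : EuclideanSpace ℝ (Fin 3)) i) ⬝ᵥ
              D⁻¹.mulVec (fun i => (u : EuclideanSpace ℝ (Fin 3)) i))
            ^ (-(3 : ℝ) / 2)) ∂sphereMeasure) = 1 := by
  classical
  set E3 := EuclideanSpace ℝ (Fin 3)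
  set A := D⁻¹ with hAdef
  have hA : A.PosDef := hD.inv
  set S := (open scoped MatrixOrder in CFC.sqrt D) with hSdef
  have hSS : S * S = D := by
    open scoped MatrixOrder in exact CFC.sqrt_mul_sqrt_self D hD.posSemidef.nonneg
  have hdetS2 : S.det * S.det = D.det := by rw [← Matrix.det_mul, hSS]
  have hdetD : 0 < D.det := hD.det_pos
  have hdetS : S.det ≠ 0 := by
    intro h
    rw [h, zero_mul] at hdetS2
    exact hdetD.ne hdetS2
  have habs : |S.det| = Real.sqrt D.det := by
    rw [← hdetS2, show S.det * S.det = S.det ^ 2 by ring, Real.sqrt_sq_eq_abs]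
  -- S * A * S = 1
  have hSinv : S * S⁻¹ = 1 := Matrix.mul_nonsing_inv S (Ne.isUnit hdetS)
  have hinvS : S⁻¹ * S = 1 := Matrix.nonsing_inv_mul S (Ne.isUnit hdetS)
  have hSAS : S * A * S = 1 := by
    rw [hAdef, ← hSS, Matrix.mul_inv_rev, ← mul_assoc, hSinv, one_mul, hinvS]
  -- symmetry facts
  have hAsymm : Aᵀ = A := by
    have := hA.isHermitian
    rwa [Matrix.IsHermitian, Matrix.conjTranspose_eq_transpose_of_trivial] at this
  have hSsymm : Sᵀ = S := by
    have := (open scoped MatrixOrder in (CFC.sqrt_nonneg D).posSemidef : S.PosSemidef).isHermitian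
    rwa [Matrix.IsHermitian, Matrix.conjTranspose_eq_transpose_of_trivial] at this
  -- the substitution identity
  have hsub : ∀ x : E3, qf A (Matrix.toEuclideanLin S x) = qf 1 x := by
    intro x
    have hcoe : (fun i => (Matrix.toEuclideanLin S x) i)
        = S.mulVec (fun i => x i) := rfl
    unfold qf
    rw [hcoe]
    set v : Fin 3 → ℝ := fun i => x i
    rw [Matrix.mulVec_mulVec, Matrix.dotProduct_mulVec, ← Matrix.mulVec_transpose,
      Matrix.mulVec_mulVec]
    have : (A * S)ᵀ * S = 1 := by
      rw [Matrix.transpose_mul, hAsymm, hSsymm]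
      exact hSAS
    rw [this]
    simp [Matrix.one_mulVec]
  -- Gaussian-type lintegrals
  set C : ENNReal := ENNReal.ofReal ((1/2) * Real.Gamma (3/2)) with hCdef
  have hcpos : (0:ℝ) < (1/2) * Real.Gamma (3/2) := by
    have := Real.Gamma_pos_of_pos (show (0:ℝ) < 3/2 by norm_num)
    positivity
  have hC0 : C ≠ 0 := (ENNReal.ofReal_pos.2 hcpos).ne'
  have hCtop : C ≠ ⊤ := ENNReal.ofReal_ne_top
  set J : ENNReal := ∫⁻ u : sphere (0 : E3) 1,
      ENNReal.ofReal (qf A (u : E3) ^ (-(3:ℝ)/2)) ∂(volume : Measure E3).toSphere with hJdef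
  have hkeyA := key hA
  have hkey1 := key Matrix.PosDef.one
  -- simplify hkey1
  have hone : ∀ u : sphere (0 : E3) 1,
      ENNReal.ofReal (qf 1 (u : E3) ^ (-(3:ℝ)/2)) = 1 := by
    intro u
    rw [qf_one_sphere, Real.one_rpow, ENNReal.ofReal_one]
  rw [lintegral_congr hone, lintegral_one, sphere_total] at hkey1
  -- change of variables
  have hgm1 : Measurable fun x : E3 => ENNReal.ofReal (Real.exp (-(qf A x))) :=
    (ENNReal.continuous_ofReal.comp
      (Real.continuous_exp.comp (qf_continuous A).neg)).measurable
  have hcov := lintegral_comp_linear S hdetS _ hgm1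
  have hcov' : (∫⁻ x : E3, ENNReal.ofReal (Real.exp (-(qf 1 x))))
      = ENNReal.ofReal |S.det|⁻¹ * ∫⁻ x : E3, ENNReal.ofReal (Real.exp (-(qf A x))) := by
    rw [← hcov]
    exact lintegral_congr fun x => by rw [hsub]
  -- combine: J * C = ofReal |S.det| * (ofReal (4π) * C)
  have hGA : (∫⁻ x : E3, ENNReal.ofReal (Real.exp (-(qf A x))))
      = ENNReal.ofReal |S.det| * (ENNReal.ofReal (4 * Real.pi) * C) := by
    have h2 : ENNReal.ofReal |S.det| * (∫⁻ x : E3, ENNReal.ofReal (Real.exp (-(qf 1 x))))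
        = ∫⁻ x : E3, ENNReal.ofReal (Real.exp (-(qf A x))) := by
      rw [hcov', ← mul_assoc, ← ENNReal.ofReal_mul (abs_nonneg _),
        mul_inv_cancel₀ (abs_ne_zero.2 hdetS), ENNReal.ofReal_one, one_mul]
    rw [← h2, hkey1]
  have hJC : J * C = ENNReal.ofReal |S.det| * ENNReal.ofReal (4 * Real.pi) * C := by
    calc J * C = ∫⁻ x : E3, ENNReal.ofReal (Real.exp (-(qf A x))) := hkeyA.symm
      _ = ENNReal.ofReal |S.det| * (ENNReal.ofReal (4 * Real.pi) * C) := hGA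
      _ = _ := by ring
  have hJ : J = ENNReal.ofReal |S.det| * ENNReal.ofReal (4 * Real.pi) := by
    exact (ENNReal.mul_left_inj hC0 hCtop).mp hJC
  rw [habs, ← ENNReal.ofReal_mul (Real.sqrt_nonneg _)] at hJ
  -- final computation
  have hk : (0:ℝ) ≤ 1 / (4 * Real.pi * Real.sqrt D.det) := by positivity
  have hqcont : Continuous fun u : sphere (0 : E3) 1 => qf A (u : E3) ^ (-(3:ℝ)/2) :=
    ((qf_continuous A).comp continuous_subtype_val).rpow_const
      fun u => Or.inl (qf_pos hA u).ne'
  have htarget : (∫ u : sphere (0 : E3) 1,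
      1 / (4 * Real.pi * Real.sqrt D.det) * (qf A (u : E3) ^ (-(3:ℝ)/2)) ∂sphereMeasure) = 1 := by
    rw [integral_eq_lintegral_of_nonneg_ae
      (Filter.Eventually.of_forall fun u =>
        mul_nonneg hk (Real.rpow_nonneg (qf_nonneg hA _) _))
      (continuous_const.mul hqcont).aestronglyMeasurable]
    have hmul : ∀ u : sphere (0 : E3) 1,
        ENNReal.ofReal (1 / (4 * Real.pi * Real.sqrt D.det) * (qf A (u : E3) ^ (-(3:ℝ)/2)))
        = ENNReal.ofReal (1 / (4 * Real.pi * Real.sqrt D.det))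
          * ENNReal.ofReal (qf A (u : E3) ^ (-(3:ℝ)/2)) := fun u =>
      ENNReal.ofReal_mul hk
    simp only [hmul]
    rw [show (sphereMeasure : Measure (sphere (0 : E3) 1))
        = (volume : Measure E3).toSphere from rfl]
    rw [lintegral_const_mul _ hqcont.measurable.ennreal_ofReal, ← hJdef, hJ,
      ← ENNReal.ofReal_mul hk]
    have hval : 1 / (4 * Real.pi * Real.sqrt D.det) * (Real.sqrt D.det * (4 * Real.pi)) = 1 := by
      have hpi : Real.pi ≠ 0 := Real.pi_ne_zero
      have hsq : Real.sqrt D.det ≠ 0 := (Real.sqrt_pos.2 hdetD).ne'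
      field_simp
    rw [hval, ENNReal.ofReal_one, ENNReal.toReal_one]
  exact htarget
end
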